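/- Let dim H > 2k > 2 and let f : G_k(H) → G_k(H) be an injective, orthogonality preserving and ortho-adjacency preserving map. Then f is adjacency preserving. -/

import Mathlib

set_option maxHeartbeats 1000000
open Module Submodule
open scoped ComplexInnerProductSpace

def Compatible {H : Type*} [NormedAddCommGroup H] [InnerProductSpace ℂ H]
    (X Y : Submodule ℂ H) : Prop :=
  ∃ X' Y' Z : Submodule ℂ H, X' ⟂ Y' ∧ X' ⟂ Z ∧ Y' ⟂ Z ∧ X = X' ⊔ Z ∧ Y = Y' ⊔ Z

section Aux
variable {H : Type*} [NormedAddCommGroup H] [InnerProductSpace ℂ H]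

lemma stmt16_fd_of_finrank_pos {S : Submodule ℂ H} (h : 0 < finrank ℂ S) :
    FiniteDimensional ℂ S :=
  Module.finite_of_finrank_pos h

/-- c ⟂ T, c ≠ 0 implies c ∉ T -/
lemma stmt16_not_mem_of_orth {T : Submodule ℂ H} {c : H} (hc : c ≠ 0)
    (h : ∀ v ∈ T, ⟪c, v⟫ = 0) : c ∉ T :=
  fun hm => hc (inner_self_eq_zero.mp (h c hm))

lemma stmt16_orth_sup {T : Submodule ℂ H} {c u : H} (h : ∀ v ∈ T, ⟪c, v⟫ = 0)
    (hu : ⟪c, u⟫ = 0) : ∀ v ∈ T ⊔ (ℂ ∙ u), ⟪c, v⟫ = 0 := by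
  intro v hv
  rcases Submodule.mem_sup.mp hv with ⟨z, hz, s, hs, rfl⟩
  rcases Submodule.mem_span_singleton.mp hs with ⟨a, rfl⟩
  rw [inner_add_right, inner_smul_right, h z hz, hu]
  simp

/-- key compatibility lemma: if a ∈ A is orthogonal to A ⊓ B, then a ⟂ B. -/
lemma stmt16_compat_inner {A B : Submodule ℂ H} (h : Compatible A B)
    {a : H} (ha : a ∈ A) (ha' : ∀ v ∈ A ⊓ B, ⟪a, v⟫ = 0) :
    ∀ b ∈ B, ⟪a, b⟫ = 0 := by
  obtain ⟨A', B', Z, hAB, hAZ, hBZ, rfl, rfl⟩ := h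
  -- first, Z = (A' ⊔ Z) ⊓ (B' ⊔ Z)
  have hinf : (A' ⊔ Z) ⊓ (B' ⊔ Z) = Z := by
    apply le_antisymm
    · rintro v ⟨hv1, hv2⟩
      rcases Submodule.mem_sup.mp hv1 with ⟨x, hx, z, hz, rfl⟩
      have h1 : ⟪x, x + z⟫ = ⟪x, x⟫ := by
        rw [inner_add_right, hAZ.inner_eq hx hz, add_zero]
      have h2 : ⟪x, x + z⟫ = 0 := by
        rcases Submodule.mem_sup.mp hv2 with ⟨y, hy, z', hz', he⟩
        rw [← he, inner_add_right, hAB.inner_eq hx hy, hAZ.inner_eq hx hz', add_zero]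
      have : x = 0 := inner_self_eq_zero.mp (h1 ▸ h2)
      simpa [this] using hz
    · exact le_inf le_sup_right le_sup_right
  -- a lies in A'
  rcases Submodule.mem_sup.mp ha with ⟨x, hx, z, hz, rfl⟩
  have hzmem : z ∈ (A' ⊔ Z) ⊓ (B' ⊔ Z) := hinf.symm ▸ hz
  have h1 : ⟪x + z, z⟫ = 0 := ha' z hzmem
  have h2 : ⟪x + z, z⟫ = ⟪z, z⟫ := by
    rw [inner_add_left, hAZ.inner_eq hx hz, zero_add]
  have hz0 : z = 0 := inner_self_eq_zero.mp (h2 ▸ h1)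
  subst hz0
  intro b hb
  rcases Submodule.mem_sup.mp hb with ⟨y, hy, z', hz', rfl⟩
  rw [add_zero]
  rw [inner_add_right, hAB.inner_eq hx hy, hAZ.inner_eq hx hz']
  simp


lemma stmt16_exists_ortho_vector {Z S : Submodule ℂ H} [FiniteDimensional ℂ Z]
    (hZS : Z ≤ S) (hne : ¬ S ≤ Z) :
    ∃ a ∈ S, a ≠ 0 ∧ ∀ v ∈ Z, ⟪a, v⟫ = 0 := by
  obtain ⟨v, hvS, hvZ⟩ := SetLike.not_le_iff_exists.mp hne
  have hmem : v - (orthogonalProjection Z v : H) ∈ Zᗮ :=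
    Submodule.sub_starProjection_mem_orthogonal (K := Z) v
  refine ⟨v - (orthogonalProjection Z v : H), ?_, ?_, ?_⟩
  · exact S.sub_mem hvS (hZS (orthogonalProjection Z v).2)
  · intro h
    rw [sub_eq_zero] at h
    exact hvZ (h ▸ (orthogonalProjection Z v).2)
  · exact fun u hu => (Z.mem_orthogonal' _).mp hmem u hu

lemma stmt16_sup_span_eq {Z S : Submodule ℂ H} [FiniteDimensional ℂ S]
    (hZS : Z ≤ S) {a : H} (haS : a ∈ S) (haZ : a ∉ Z)
    (hr : finrank ℂ Z + 1 = finrank ℂ S) : Z ⊔ (ℂ ∙ a) = S := by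
  have hle : Z ⊔ (ℂ ∙ a) ≤ S := sup_le hZS ((Submodule.span_singleton_le_iff_mem a S).mpr haS)
  haveI : FiniteDimensional ℂ (Z ⊔ (ℂ ∙ a) : Submodule ℂ H) :=
    Submodule.finiteDimensional_of_le hle
  have hlt : Z < Z ⊔ (ℂ ∙ a) := by
    refine lt_of_le_of_ne le_sup_left (fun h => haZ ?_)
    rw [h]
    exact (le_sup_right : (ℂ ∙ a) ≤ Z ⊔ (ℂ ∙ a)) (Submodule.mem_span_singleton_self a)
  have h1 : finrank ℂ Z < finrank ℂ (Z ⊔ (ℂ ∙ a) : Submodule ℂ H) :=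
    Submodule.finrank_lt_finrank_of_lt hlt
  have h2 : finrank ℂ (Z ⊔ (ℂ ∙ a) : Submodule ℂ H) ≤ finrank ℂ S :=
    Submodule.finrank_mono hle
  exact Submodule.eq_of_le_of_finrank_le hle (by omega)

lemma stmt16_finrank_sup_span {Z : Submodule ℂ H} [FiniteDimensional ℂ Z] {u : H}
    (hu0 : u ≠ 0) (huZ : ∀ z ∈ Z, ⟪u, z⟫ = 0) :
    finrank ℂ (Z ⊔ (ℂ ∙ u) : Submodule ℂ H) = finrank ℂ Z + 1 := by
  have hinf : Z ⊓ (ℂ ∙ u) = ⊥ := by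
    rw [eq_bot_iff]
    rintro v ⟨hvZ, hvs⟩
    rcases Submodule.mem_span_singleton.mp hvs with ⟨c, rfl⟩
    have h1 : ⟪u, c • u⟫ = 0 := huZ _ hvZ
    rw [inner_smul_right] at h1
    rcases mul_eq_zero.mp h1 with h | h
    · simp [h]
    · exact absurd (inner_self_eq_zero.mp h) hu0
  have := Submodule.finrank_sup_add_finrank_inf_eq Z (ℂ ∙ u)
  rw [hinf, finrank_span_singleton hu0] at this
  simpa using this

lemma stmt16_exists_orth_global [CompleteSpace H] {S : Submodule ℂ H} [FiniteDimensional ℂ S]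
    (h : (finrank ℂ S : Cardinal) < Module.rank ℂ H) :
    ∃ w : H, w ≠ 0 ∧ ∀ v ∈ S, ⟪w, v⟫ = 0 := by
  have hbot : Sᗮ ≠ ⊥ := by
    intro hb
    have htop : S = ⊤ := by
      have := Submodule.sup_orthogonal_of_hasOrthogonalProjection (K := S)
      rw [hb, sup_bot_eq] at this
      exact this
    have : Module.rank ℂ S = Module.rank ℂ H := by
      rw [htop]; exact rank_top ℂ H
    rw [← Module.finrank_eq_rank] at this
    rw [this] at h
    exact lt_irrefl _ h
  obtain ⟨w, hw, hw0⟩ := Submodule.ne_bot_iff _ |>.mp hbot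
  exact ⟨w, hw0, fun v hv => (S.mem_orthogonal' _).mp hw v hv⟩


lemma stmt16_finrank_inf_lt {k : ℕ} (hk : 0 < k) {A B : Submodule ℂ H}
    [FiniteDimensional ℂ A] [FiniteDimensional ℂ B]
    (hA : finrank ℂ A = k) (hB : finrank ℂ B = k) (hne : A ≠ B) :
    finrank ℂ (A ⊓ B : Submodule ℂ H) < k := by
  have hle : finrank ℂ (A ⊓ B : Submodule ℂ H) ≤ k :=
    hA ▸ Submodule.finrank_mono inf_le_left
  rcases lt_or_eq_of_le hle with h | h
  · exact h
  · exfalso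
    have h1 : A ⊓ B = A :=
      Submodule.eq_of_le_of_finrank_le inf_le_left (by omega)
    have h2 : A ≤ B := h1 ▸ inf_le_right
    exact hne (Submodule.eq_of_le_of_finrank_le h2 (by omega))

/-- star/top lemma -/
lemma stmt16_star_top {k : ℕ} (hk : 2 ≤ k) {T C1 C2 : Submodule ℂ H}
    (hT : finrank ℂ T = k) (hC1 : finrank ℂ C1 = k) (hC2 : finrank ℂ C2 = k)
    (h1 : finrank ℂ (T ⊓ C1 : Submodule ℂ H) = k - 1)
    (h2 : finrank ℂ (T ⊓ C2 : Submodule ℂ H) = k - 1)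
    (h12 : finrank ℂ (C1 ⊓ C2 : Submodule ℂ H) = k - 1) :
    C1 ⊓ C2 ≤ T ∨ T ≤ C1 ⊔ C2 := by
  haveI : FiniteDimensional ℂ T := Module.finite_of_finrank_pos (by omega)
  haveI : FiniteDimensional ℂ C1 := Module.finite_of_finrank_pos (by omega)
  haveI : FiniteDimensional ℂ C2 := Module.finite_of_finrank_pos (by omega)
  by_cases he : T ⊓ C1 = T ⊓ C2
  · left
    have hle : T ⊓ C1 ≤ C1 ⊓ C2 := le_inf inf_le_right (he ▸ inf_le_right)
    have : T ⊓ C1 = C1 ⊓ C2 := Submodule.eq_of_le_of_finrank_le hle (by omega)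
    exact this ▸ inf_le_left
  · right
    set R : Submodule ℂ H := (T ⊓ C1) ⊔ (T ⊓ C2) with hR
    have hRT : R ≤ T := sup_le inf_le_left inf_le_left
    have hii : (T ⊓ C1) ⊓ (T ⊓ C2) < T ⊓ C1 := by
      refine lt_of_le_of_ne inf_le_left (fun h => he ?_)
      have hle2 : T ⊓ C1 ≤ T ⊓ C2 := h ▸ inf_le_right
      exact Submodule.eq_of_le_of_finrank_le hle2 (by omega)
    have hiilt : finrank ℂ ((T ⊓ C1) ⊓ (T ⊓ C2) : Submodule ℂ H) < k - 1 :=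
      h1 ▸ Submodule.finrank_lt_finrank_of_lt hii
  -- finrank R ≥ k
    have hsum := Submodule.finrank_sup_add_finrank_inf_eq (T ⊓ C1) (T ⊓ C2)
    rw [h1, h2, ← hR] at hsum
    have hRk : k ≤ finrank ℂ R := by omega
    have hTR : R = T := Submodule.eq_of_le_of_finrank_le hRT (by omega)
    rw [← hTR]
    exact sup_le (inf_le_right.trans le_sup_left) (inf_le_right.trans le_sup_right)

/-- the pair (Z ⊔ ℂu, Z ⊔ ℂv) is ortho-adjacent when u ⟂ v, both ⟂ Z and nonzero -/
lemma stmt16_pair_facts {Z : Submodule ℂ H} {u v : H}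
    (hu0 : u ≠ 0) (huv : ⟪u, v⟫ = 0)
    (huZ : ∀ z ∈ Z, ⟪u, z⟫ = 0) (hvZ : ∀ z ∈ Z, ⟪v, z⟫ = 0) :
    (Z ⊔ (ℂ ∙ u)) ⊓ (Z ⊔ (ℂ ∙ v)) = Z ∧ Compatible (Z ⊔ (ℂ ∙ u)) (Z ⊔ (ℂ ∙ v)) := by
  constructor
  · apply le_antisymm
    · rintro w ⟨hw1, hw2⟩
      rcases Submodule.mem_sup.mp hw1 with ⟨z, hz, s, hs, rfl⟩
      rcases Submodule.mem_span_singleton.mp hs with ⟨c, rfl⟩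
      have h1 : ⟪u, z + c • u⟫ = c * ⟪u, u⟫ := by
        rw [inner_add_right, inner_smul_right, huZ z hz, zero_add]
      have h2 : ⟪u, z + c • u⟫ = 0 := by
        rcases Submodule.mem_sup.mp hw2 with ⟨z', hz', s', hs', he⟩
        rcases Submodule.mem_span_singleton.mp hs' with ⟨c', rfl⟩
        rw [← he, inner_add_right, inner_smul_right, huZ z' hz', huv]
        simp
      have hc : c = 0 := by
        rcases mul_eq_zero.mp (h1 ▸ h2) with h | h
        · exact h
        · exact absurd (inner_self_eq_zero.mp h) hu0
      simpa [hc] using hz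
    · exact le_inf le_sup_left le_sup_left
  · refine ⟨ℂ ∙ u, ℂ ∙ v, Z, ?_, ?_, ?_, by rw [sup_comm], by rw [sup_comm]⟩
    · rw [Submodule.isOrtho_iff_inner_eq]
      rintro a ha b hb
      rcases Submodule.mem_span_singleton.mp ha with ⟨c, rfl⟩
      rcases Submodule.mem_span_singleton.mp hb with ⟨c', rfl⟩
      rw [inner_smul_right, inner_smul_left, huv]; ring
    · rw [Submodule.isOrtho_iff_inner_eq]
      rintro a ha b hb
      rcases Submodule.mem_span_singleton.mp ha with ⟨c, rfl⟩
      rw [inner_smul_left, huZ b hb]; ring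
    · rw [Submodule.isOrtho_iff_inner_eq]
      rintro a ha b hb
      rcases Submodule.mem_span_singleton.mp ha with ⟨c, rfl⟩
      rw [inner_smul_left, hvZ b hb]; ring


lemma stmt16_mixed_contradiction {k : ℕ} (hk : 2 ≤ k)
    {A B C1 C2 C3 : Submodule ℂ H}
    (frA : finrank ℂ A = k) (frB : finrank ℂ B = k)
    (frC1 : finrank ℂ C1 = k) (frC2 : finrank ℂ C2 = k) (frC3 : finrank ℂ C3 = k)
    (hAC1 : finrank ℂ (A ⊓ C1 : Submodule ℂ H) = k - 1) (cAC1 : Compatible A C1)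
    (hAC2 : finrank ℂ (A ⊓ C2 : Submodule ℂ H) = k - 1) (cAC2 : Compatible A C2)
    (hAC3 : finrank ℂ (A ⊓ C3 : Submodule ℂ H) = k - 1)
    (hBC3 : finrank ℂ (B ⊓ C3 : Submodule ℂ H) = k - 1)
    (hC12 : finrank ℂ (C1 ⊓ C2 : Submodule ℂ H) = k - 1) (cC12 : Compatible C1 C2)
    (hC13 : finrank ℂ (C1 ⊓ C3 : Submodule ℂ H) = k - 1) (cC13 : Compatible C1 C3)
    (hC23 : finrank ℂ (C2 ⊓ C3 : Submodule ℂ H) = k - 1) (cC23 : Compatible C2 C3)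
    (hDA : C1 ⊓ C2 ≤ A) (hBP : B ≤ C1 ⊔ C2) (hDB : ¬ C1 ⊓ C2 ≤ B) : False := by
  haveI : FiniteDimensional ℂ A := Module.finite_of_finrank_pos (by omega)
  haveI : FiniteDimensional ℂ B := Module.finite_of_finrank_pos (by omega)
  haveI : FiniteDimensional ℂ C1 := Module.finite_of_finrank_pos (by omega)
  haveI : FiniteDimensional ℂ C2 := Module.finite_of_finrank_pos (by omega)
  haveI : FiniteDimensional ℂ C3 := Module.finite_of_finrank_pos (by omega)
  have hDP : C1 ⊓ C2 ≤ C1 ⊔ C2 := inf_le_left.trans le_sup_left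
  have hsumP := Submodule.finrank_sup_add_finrank_inf_eq C1 C2
  rw [frC1, frC2, hC12] at hsumP
  have frP : finrank ℂ (C1 ⊔ C2 : Submodule ℂ H) = k + 1 := by omega
  -- A ⊓ C1 = D, A ⊓ C2 = D
  have hAC1eq : C1 ⊓ C2 = A ⊓ C1 :=
    Submodule.eq_of_le_of_finrank_le (le_inf hDA inf_le_left) (by omega)
  have hAC2eq : C1 ⊓ C2 = A ⊓ C2 :=
    Submodule.eq_of_le_of_finrank_le (le_inf hDA inf_le_right) (by omega)
  -- the vector a
  obtain ⟨a, haA, ha0, haD⟩ := stmt16_exists_ortho_vector hDA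
    (fun h => by have := Submodule.finrank_mono h; omega)
  have haC1 : ∀ c ∈ C1, ⟪a, c⟫ = 0 :=
    stmt16_compat_inner cAC1 haA (fun v hv => haD v (by rw [hAC1eq]; exact hv))
  have haC2 : ∀ c ∈ C2, ⟪a, c⟫ = 0 :=
    stmt16_compat_inner cAC2 haA (fun v hv => haD v (by rw [hAC2eq]; exact hv))
  have haP : ∀ p ∈ C1 ⊔ C2, ⟪a, p⟫ = 0 := by
    intro p hp
    rcases Submodule.mem_sup.mp hp with ⟨p1, hp1, p2, hp2, rfl⟩
    rw [inner_add_right, haC1 p1 hp1, haC2 p2 hp2, add_zero]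
  have hAeq : (C1 ⊓ C2) ⊔ (ℂ ∙ a) = A :=
    stmt16_sup_span_eq hDA haA (stmt16_not_mem_of_orth ha0 haD) (by omega)
  have hAPle : A ⊓ (C1 ⊔ C2) ≤ C1 ⊓ C2 := by
    rintro v ⟨hvA, hvP⟩
    rw [← hAeq] at hvA
    rcases Submodule.mem_sup.mp hvA with ⟨z, hz, s, hs, rfl⟩
    rcases Submodule.mem_span_singleton.mp hs with ⟨c, rfl⟩
    have hcaP : c • a ∈ C1 ⊔ C2 := by
      have : (z + c • a) - z ∈ C1 ⊔ C2 := Submodule.sub_mem _ hvP (hDP hz)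
      simpa using this
    by_cases hc : c = 0
    · simpa [hc] using hz
    · exfalso
      have haP' : a ∈ C1 ⊔ C2 := by
        have := Submodule.smul_mem _ c⁻¹ hcaP
        rwa [inv_smul_smul₀ hc] at this
      exact ha0 (inner_self_eq_zero.mp (haP a haP'))
  -- D ≤ C3
  have h31 : finrank ℂ (C3 ⊓ C1 : Submodule ℂ H) = k - 1 := by
    rw [inf_comm]; exact hC13
  have h32 : finrank ℂ (C3 ⊓ C2 : Submodule ℂ H) = k - 1 := by
    rw [inf_comm]; exact hC23
  have hDC3 : C1 ⊓ C2 ≤ C3 := by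
    rcases stmt16_star_top hk frC3 frC1 frC2 h31 h32 hC12 with h | h
    · exact h
    · have hle : A ⊓ C3 ≤ C1 ⊓ C2 :=
        le_trans (le_inf inf_le_left (inf_le_right.trans h)) hAPle
      have heq : A ⊓ C3 = C1 ⊓ C2 :=
        Submodule.eq_of_le_of_finrank_le hle (by omega)
      exact (le_of_eq heq.symm).trans inf_le_right
  haveI : FiniteDimensional ℂ (C1 ⊓ C2 : Submodule ℂ H) :=
    Module.finite_of_finrank_pos (by omega)
  -- the vector c3
  obtain ⟨c3, hc3C3, hc30, hc3D⟩ := stmt16_exists_ortho_vector hDC3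
    (fun h => by have := Submodule.finrank_mono h; omega)
  have hC3eq : (C1 ⊓ C2) ⊔ (ℂ ∙ c3) = C3 := stmt16_sup_span_eq hDC3 hc3C3
    (stmt16_not_mem_of_orth hc30 hc3D) (by omega)
  -- c3 ∈ P
  have hc3P : c3 ∈ C1 ⊔ C2 := by
    by_contra hc3P
    have hBC3le : B ⊓ C3 ≤ B ⊓ (C1 ⊓ C2) := by
      rintro v ⟨hvB, hvC3⟩
      rw [← hC3eq] at hvC3
      rcases Submodule.mem_sup.mp hvC3 with ⟨z, hz, s, hs, he⟩
      rcases Submodule.mem_span_singleton.mp hs with ⟨c, rfl⟩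
      have hcaP : c • c3 ∈ C1 ⊔ C2 := by
        have : (z + c • c3) - z ∈ C1 ⊔ C2 := Submodule.sub_mem _ (he ▸ hBP hvB) (hDP hz)
        simpa using this
      by_cases hc : c = 0
      · refine ⟨hvB, ?_⟩
        rw [← he, hc]; simpa using hz
      · exfalso
        apply hc3P
        have := Submodule.smul_mem (C1 ⊔ C2) c⁻¹ hcaP
        rwa [inv_smul_smul₀ hc] at this
    have hlt : B ⊓ (C1 ⊓ C2) < C1 ⊓ C2 :=
      lt_of_le_of_ne inf_le_right (fun h => hDB (h ▸ inf_le_left))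
    have h1 := Submodule.finrank_mono hBC3le
    have h2 := Submodule.finrank_lt_finrank_of_lt hlt
    omega
  -- vectors c1 c2
  obtain ⟨c1, hc1C1, hc10, hc1D⟩ :=
    stmt16_exists_ortho_vector (inf_le_left : C1 ⊓ C2 ≤ C1)
      (fun h => by have := Submodule.finrank_mono h; omega)
  obtain ⟨c2, hc2C2, hc20, hc2D⟩ :=
    stmt16_exists_ortho_vector (inf_le_right : C1 ⊓ C2 ≤ C2)
      (fun h => by have := Submodule.finrank_mono h; omega)
  -- intersections with C3 equal D
  have hC13eq : C1 ⊓ C2 = C1 ⊓ C3 :=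
    Submodule.eq_of_le_of_finrank_le (le_inf inf_le_left hDC3) (by omega)
  have hC23eq : C1 ⊓ C2 = C2 ⊓ C3 :=
    Submodule.eq_of_le_of_finrank_le (le_inf inf_le_right hDC3) (by omega)
  -- pairwise orthogonality
  have h12 : ⟪c1, c2⟫ = 0 := stmt16_compat_inner cC12 hc1C1 hc1D c2 hc2C2
  have h13 : ⟪c1, c3⟫ = 0 :=
    stmt16_compat_inner cC13 hc1C1 (fun v hv => hc1D v (by rw [hC13eq]; exact hv)) c3 hc3C3
  have h23 : ⟪c2, c3⟫ = 0 :=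
    stmt16_compat_inner cC23 hc2C2 (fun v hv => hc2D v (by rw [hC23eq]; exact hv)) c3 hc3C3
  -- tower
  have hT1 : finrank ℂ ((C1 ⊓ C2) ⊔ (ℂ ∙ c1) : Submodule ℂ H) = (k - 1) + 1 := by
    rw [stmt16_finrank_sup_span hc10 hc1D, hC12]
  have hc2T1 : ∀ v ∈ (C1 ⊓ C2) ⊔ (ℂ ∙ c1), ⟪c2, v⟫ = 0 :=
    stmt16_orth_sup hc2D (inner_eq_zero_symm.mp h12)
  have hT2 : finrank ℂ (((C1 ⊓ C2) ⊔ (ℂ ∙ c1)) ⊔ (ℂ ∙ c2) : Submodule ℂ H)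
      = (k - 1) + 2 := by
    rw [stmt16_finrank_sup_span hc20 hc2T1, hT1]
  have hc3T2 : ∀ v ∈ ((C1 ⊓ C2) ⊔ (ℂ ∙ c1)) ⊔ (ℂ ∙ c2), ⟪c3, v⟫ = 0 :=
    stmt16_orth_sup (stmt16_orth_sup hc3D (inner_eq_zero_symm.mp h13)) (inner_eq_zero_symm.mp h23)
  have hT3 : finrank ℂ ((((C1 ⊓ C2) ⊔ (ℂ ∙ c1)) ⊔ (ℂ ∙ c2)) ⊔ (ℂ ∙ c3) : Submodule ℂ H)
      = (k - 1) + 3 := by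
    rw [stmt16_finrank_sup_span hc30 hc3T2, hT2]
  have hle : (((C1 ⊓ C2) ⊔ (ℂ ∙ c1)) ⊔ (ℂ ∙ c2)) ⊔ (ℂ ∙ c3) ≤ C1 ⊔ C2 := by
    refine sup_le (sup_le (sup_le hDP ?_) ?_) ?_
    · exact (Submodule.span_singleton_le_iff_mem _ _).mpr (le_sup_left (a := C1) hc1C1)
    · exact (Submodule.span_singleton_le_iff_mem _ _).mpr (le_sup_right (b := C2) hc2C2)
    · exact (Submodule.span_singleton_le_iff_mem _ _).mpr hc3P
  have := Submodule.finrank_mono hle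
  omega


lemma stmt16_endgame {k : ℕ} (hk : 2 ≤ k) {A B C1 C2 C3 : Submodule ℂ H}
    (frA : finrank ℂ A = k) (frB : finrank ℂ B = k)
    (frC1 : finrank ℂ C1 = k) (frC2 : finrank ℂ C2 = k) (frC3 : finrank ℂ C3 = k)
    (hub : finrank ℂ (A ⊓ B : Submodule ℂ H) < k)
    (hA1 : finrank ℂ (A ⊓ C1 : Submodule ℂ H) = k - 1) (cA1 : Compatible A C1)
    (hA2 : finrank ℂ (A ⊓ C2 : Submodule ℂ H) = k - 1) (cA2 : Compatible A C2)
    (hA3 : finrank ℂ (A ⊓ C3 : Submodule ℂ H) = k - 1)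
    (hB1 : finrank ℂ (B ⊓ C1 : Submodule ℂ H) = k - 1) (cB1 : Compatible B C1)
    (hB2 : finrank ℂ (B ⊓ C2 : Submodule ℂ H) = k - 1) (cB2 : Compatible B C2)
    (hB3 : finrank ℂ (B ⊓ C3 : Submodule ℂ H) = k - 1)
    (hC12 : finrank ℂ (C1 ⊓ C2 : Submodule ℂ H) = k - 1) (cC12 : Compatible C1 C2)
    (hC13 : finrank ℂ (C1 ⊓ C3 : Submodule ℂ H) = k - 1) (cC13 : Compatible C1 C3)
    (hC23 : finrank ℂ (C2 ⊓ C3 : Submodule ℂ H) = k - 1) (cC23 : Compatible C2 C3) :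
    finrank ℂ (A ⊓ B : Submodule ℂ H) = k - 1 := by
  haveI : FiniteDimensional ℂ A := Module.finite_of_finrank_pos (by omega)
  haveI : FiniteDimensional ℂ B := Module.finite_of_finrank_pos (by omega)
  haveI : FiniteDimensional ℂ C1 := Module.finite_of_finrank_pos (by omega)
  haveI : FiniteDimensional ℂ C2 := Module.finite_of_finrank_pos (by omega)
  have hsumAB := Submodule.finrank_sup_add_finrank_inf_eq A B
  rw [frA, frB] at hsumAB
  rcases stmt16_star_top hk frA frC1 frC2 hA1 hA2 hC12 with hA | hA <;>
    rcases stmt16_star_top hk frB frC1 frC2 hB1 hB2 hC12 with hB | hB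
  · have hle : C1 ⊓ C2 ≤ A ⊓ B := le_inf hA hB
    have := Submodule.finrank_mono hle
    omega
  · by_cases hDB : C1 ⊓ C2 ≤ B
    · have hle : C1 ⊓ C2 ≤ A ⊓ B := le_inf hA hDB
      have := Submodule.finrank_mono hle
      omega
    · exact absurd (stmt16_mixed_contradiction hk frA frB frC1 frC2 frC3
        hA1 cA1 hA2 cA2 hA3 hB3 hC12 cC12 hC13 cC13 hC23 cC23 hA hB hDB) (fun h => h)
  · by_cases hDA : C1 ⊓ C2 ≤ A
    · have hle : C1 ⊓ C2 ≤ A ⊓ B := le_inf hDA hB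
      have := Submodule.finrank_mono hle
      omega
    · have := stmt16_mixed_contradiction hk frB frA frC1 frC2 frC3
        hB1 cB1 hB2 cB2 hB3 hA3 hC12 cC12 hC13 cC13 hC23 cC23 hB hA hDA
      exact absurd this (fun h => h)
  · have hsumP := Submodule.finrank_sup_add_finrank_inf_eq C1 C2
    rw [frC1, frC2, hC12] at hsumP
    have hle : A ⊔ B ≤ C1 ⊔ C2 := sup_le hA hB
    have := Submodule.finrank_mono hle
    omega

end Aux

theorem stmt_16 {H : Type*} [NormedAddCommGroup H] [InnerProductSpace ℂ H] [CompleteSpace H]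
    {k : ℕ} (hk : 2 < 2 * k) (hdim : (2 * k : Cardinal) < Module.rank ℂ H)
    (f : {X : Submodule ℂ H // Module.finrank ℂ ↥X = k} →
         {X : Submodule ℂ H // Module.finrank ℂ ↥X = k})
    (hinj : Function.Injective f)
    (horth : ∀ X Y, X.1 ⟂ Y.1 → (f X).1 ⟂ (f Y).1)
    (hoadj : ∀ X Y : {X : Submodule ℂ H // Module.finrank ℂ ↥X = k},
      Module.finrank ℂ ↥(X.1 ⊓ Y.1) = k - 1 → Compatible X.1 Y.1 →
      Module.finrank ℂ ↥((f X).1 ⊓ (f Y).1) = k - 1 ∧ Compatible (f X).1 (f Y).1) :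
    ∀ X Y : {X : Submodule ℂ H // Module.finrank ℂ ↥X = k},
      Module.finrank ℂ ↥(X.1 ⊓ Y.1) = k - 1 →
      Module.finrank ℂ ↥((f X).1 ⊓ (f Y).1) = k - 1 := by
  intro X Y hXY
  have hk2 : 2 ≤ k := by omega
  have frX := X.2
  have frY := Y.2
  have frA := (f X).2
  have frB := (f Y).2
  haveI : FiniteDimensional ℂ X.1 := Module.finite_of_finrank_pos (by omega)
  haveI : FiniteDimensional ℂ Y.1 := Module.finite_of_finrank_pos (by omega)
  haveI : FiniteDimensional ℂ (f X).1 := Module.finite_of_finrank_pos (by omega)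
  haveI : FiniteDimensional ℂ (f Y).1 := Module.finite_of_finrank_pos (by omega)
  haveI : FiniteDimensional ℂ (X.1 ⊓ Y.1 : Submodule ℂ H) :=
    Module.finite_of_finrank_pos (by omega)
  -- X ≠ Y hence f X ≠ f Y
  have hXYne : X ≠ Y := by
    intro h
    rw [h, inf_idem] at hXY
    omega
  have hABne : (f X).1 ≠ (f Y).1 := fun h => hXYne (hinj (Subtype.ext h))
  have hub : finrank ℂ ((f X).1 ⊓ (f Y).1 : Submodule ℂ H) < k :=
    stmt16_finrank_inf_lt (by omega) frA frB hABne
  -- the space M = X ⊔ Y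
  have hsumM := Submodule.finrank_sup_add_finrank_inf_eq X.1 Y.1
  rw [frX, frY, hXY] at hsumM
  have frM : finrank ℂ (X.1 ⊔ Y.1 : Submodule ℂ H) = k + 1 := by omega
  have hsumAB := Submodule.finrank_sup_add_finrank_inf_eq (f X).1 (f Y).1
  rw [frA, frB] at hsumAB
  by_cases hcase : Module.rank ℂ H ≤ ((2 * k + 1 : ℕ) : Cardinal)
  · -- CASE 1 : dim H = 2k+1
    have hge : ((2 * k + 1 : ℕ) : Cardinal) ≤ Module.rank ℂ H := by
      have h1 : (2 * k : Cardinal) + 1 ≤ Module.rank ℂ H :=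
        (Cardinal.add_one_le_succ _).trans (Order.succ_le_of_lt hdim)
      convert h1 using 1
      push_cast
      ring
    have hrank : Module.rank ℂ H = ((2 * k + 1 : ℕ) : Cardinal) := le_antisymm hcase hge
    haveI : FiniteDimensional ℂ H := FiniteDimensional.of_rank_eq_nat hrank
    have frH : finrank ℂ H = 2 * k + 1 := by
      have := Module.finrank_eq_rank ℂ H
      rw [hrank] at this
      exact_mod_cast this
    have frV : finrank ℂ ((X.1 ⊔ Y.1)ᗮ : Submodule ℂ H) = k := by
      have := Submodule.finrank_add_finrank_orthogonal (K := X.1 ⊔ Y.1)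
      omega
    have hXV : X.1 ⟂ ((X.1 ⊔ Y.1)ᗮ : Submodule ℂ H) :=
      (Submodule.isOrtho_orthogonal_right _).mono_left le_sup_left
    have hYV : Y.1 ⟂ ((X.1 ⊔ Y.1)ᗮ : Submodule ℂ H) :=
      (Submodule.isOrtho_orthogonal_right _).mono_left le_sup_right
    have hA := horth X ⟨_, frV⟩ hXV
    have hB := horth Y ⟨_, frV⟩ hYV
    have frE := (f ⟨_, frV⟩).2
    have frEp : finrank ℂ ((((f ⟨_, frV⟩).1)ᗮ : Submodule ℂ H)) = k + 1 := by
      have := Submodule.finrank_add_finrank_orthogonal (K := (f ⟨_, frV⟩).1)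
      omega
    have hle : (f X).1 ⊔ (f Y).1 ≤ ((f ⟨_, frV⟩).1)ᗮ := sup_le hA hB
    have h1 : finrank ℂ ((f X).1 ⊔ (f Y).1 : Submodule ℂ H) ≤ k + 1 :=
      frEp ▸ Submodule.finrank_mono hle
    omega
  · -- CASE 2 : dim H ≥ 2k+2
    have hcase' : ((2 * k + 1 : ℕ) : Cardinal) < Module.rank ℂ H := not_le.mp hcase
    -- vectors x, y
    obtain ⟨x, hxX, hx0, hxZ⟩ := stmt16_exists_ortho_vector
      (inf_le_left : X.1 ⊓ Y.1 ≤ X.1)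
      (fun h => by have := Submodule.finrank_mono h; omega)
    obtain ⟨y, hyY, hy0, hyZ⟩ := stmt16_exists_ortho_vector
      (inf_le_right : X.1 ⊓ Y.1 ≤ Y.1)
      (fun h => by have := Submodule.finrank_mono h; omega)
    have hXeq : (X.1 ⊓ Y.1) ⊔ (ℂ ∙ x) = X.1 :=
      stmt16_sup_span_eq inf_le_left hxX (stmt16_not_mem_of_orth hx0 hxZ) (by omega)
    have hYeq : (X.1 ⊓ Y.1) ⊔ (ℂ ∙ y) = Y.1 :=
      stmt16_sup_span_eq inf_le_right hyY (stmt16_not_mem_of_orth hy0 hyZ) (by omega)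
    -- the three orthogonal directions w1 w2 w3
    have hcard1 : (finrank ℂ ((X.1 ⊔ Y.1 : Submodule ℂ H)) : Cardinal) < Module.rank ℂ H := by
      rw [frM]
      exact lt_of_le_of_lt (by exact_mod_cast Nat.cast_le.mpr (by omega : k + 1 ≤ 2 * k + 1)) hcase'
    obtain ⟨w1, hw10, hw1S⟩ := stmt16_exists_orth_global hcard1
    have frS1 : finrank ℂ ((X.1 ⊔ Y.1) ⊔ (ℂ ∙ w1) : Submodule ℂ H) = k + 2 := by
      rw [stmt16_finrank_sup_span hw10 hw1S, frM]
    have hcard2 : (finrank ℂ (((X.1 ⊔ Y.1) ⊔ (ℂ ∙ w1) : Submodule ℂ H)) : Cardinal)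
        < Module.rank ℂ H := by
      rw [frS1]
      exact lt_of_le_of_lt (by exact_mod_cast Nat.cast_le.mpr (by omega : k + 2 ≤ 2 * k + 1)) hcase'
    obtain ⟨w2, hw20, hw2S⟩ := stmt16_exists_orth_global hcard2
    have hw2M : ∀ v ∈ X.1 ⊔ Y.1, ⟪w2, v⟫ = 0 := fun v hv => hw2S v (Submodule.mem_sup_left hv)
    have hw2w1 : ⟪w2, w1⟫ = 0 :=
      hw2S w1 (Submodule.mem_sup_right (Submodule.mem_span_singleton_self w1))
    have frS2 : finrank ℂ (((X.1 ⊔ Y.1) ⊔ (ℂ ∙ w1)) ⊔ (ℂ ∙ w2) : Submodule ℂ H) = k + 3 := by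
      rw [stmt16_finrank_sup_span hw20 hw2S, frS1]
    have hcard3 : (finrank ℂ ((((X.1 ⊔ Y.1) ⊔ (ℂ ∙ w1)) ⊔ (ℂ ∙ w2) : Submodule ℂ H)) : Cardinal)
        < Module.rank ℂ H := by
      rw [frS2]
      exact lt_of_le_of_lt (by exact_mod_cast Nat.cast_le.mpr (by omega : k + 3 ≤ 2 * k + 1)) hcase'
    obtain ⟨w3, hw30, hw3S⟩ := stmt16_exists_orth_global hcard3
    have hw3M : ∀ v ∈ X.1 ⊔ Y.1, ⟪w3, v⟫ = 0 :=
      fun v hv => hw3S v (Submodule.mem_sup_left (Submodule.mem_sup_left hv))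
    have hw3w1 : ⟪w3, w1⟫ = 0 :=
      hw3S w1 (Submodule.mem_sup_left (Submodule.mem_sup_right (Submodule.mem_span_singleton_self w1)))
    have hw3w2 : ⟪w3, w2⟫ = 0 :=
      hw3S w2 (Submodule.mem_sup_right (Submodule.mem_span_singleton_self w2))
    -- orthogonality with Z and M members
    have hZM : X.1 ⊓ Y.1 ≤ X.1 ⊔ Y.1 := inf_le_left.trans le_sup_left
    have hw1Z : ∀ z ∈ X.1 ⊓ Y.1, ⟪w1, z⟫ = 0 := fun z hz => hw1S z (hZM hz)
    have hw2Z : ∀ z ∈ X.1 ⊓ Y.1, ⟪w2, z⟫ = 0 := fun z hz => hw2M z (hZM hz)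
    have hw3Z : ∀ z ∈ X.1 ⊓ Y.1, ⟪w3, z⟫ = 0 := fun z hz => hw3M z (hZM hz)
    have hxM : x ∈ X.1 ⊔ Y.1 := Submodule.mem_sup_left hxX
    have hyM : y ∈ X.1 ⊔ Y.1 := Submodule.mem_sup_right hyY
    have hxw1 : ⟪x, w1⟫ = 0 := inner_eq_zero_symm.mp (hw1S x hxM)
    have hxw2 : ⟪x, w2⟫ = 0 := inner_eq_zero_symm.mp (hw2M x hxM)
    have hxw3 : ⟪x, w3⟫ = 0 := inner_eq_zero_symm.mp (hw3M x hxM)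
    have hyw1 : ⟪y, w1⟫ = 0 := inner_eq_zero_symm.mp (hw1S y hyM)
    have hyw2 : ⟪y, w2⟫ = 0 := inner_eq_zero_symm.mp (hw2M y hyM)
    have hyw3 : ⟪y, w3⟫ = 0 := inner_eq_zero_symm.mp (hw3M y hyM)
    have hw1w2 : ⟪w1, w2⟫ = 0 := inner_eq_zero_symm.mp hw2w1
    have hw1w3 : ⟪w1, w3⟫ = 0 := inner_eq_zero_symm.mp hw3w1
    have hw2w3 : ⟪w2, w3⟫ = 0 := inner_eq_zero_symm.mp hw3w2
    -- the subspaces W i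
    have frW1 : finrank ℂ ((X.1 ⊓ Y.1) ⊔ (ℂ ∙ w1) : Submodule ℂ H) = k := by
      rw [stmt16_finrank_sup_span hw10 hw1Z, hXY]; omega
    have frW2 : finrank ℂ ((X.1 ⊓ Y.1) ⊔ (ℂ ∙ w2) : Submodule ℂ H) = k := by
      rw [stmt16_finrank_sup_span hw20 hw2Z, hXY]; omega
    have frW3 : finrank ℂ ((X.1 ⊓ Y.1) ⊔ (ℂ ∙ w3) : Submodule ℂ H) = k := by
      rw [stmt16_finrank_sup_span hw30 hw3Z, hXY]; omega
    -- pair facts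
    have pXW1 := stmt16_pair_facts hx0 hxw1 hxZ hw1Z
    have pXW2 := stmt16_pair_facts hx0 hxw2 hxZ hw2Z
    have pXW3 := stmt16_pair_facts hx0 hxw3 hxZ hw3Z
    have pYW1 := stmt16_pair_facts hy0 hyw1 hyZ hw1Z
    have pYW2 := stmt16_pair_facts hy0 hyw2 hyZ hw2Z
    have pYW3 := stmt16_pair_facts hy0 hyw3 hyZ hw3Z
    have pW12 := stmt16_pair_facts hw10 hw1w2 hw1Z hw2Z
    have pW13 := stmt16_pair_facts hw10 hw1w3 hw1Z hw3Z
    have pW23 := stmt16_pair_facts hw20 hw2w3 hw2Z hw3Z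
    rw [hXeq] at pXW1 pXW2 pXW3
    rw [hYeq] at pYW1 pYW2 pYW3
    -- apply hoadj
    let W1 : {S : Submodule ℂ H // finrank ℂ ↥S = k} := ⟨(X.1 ⊓ Y.1) ⊔ (ℂ ∙ w1), frW1⟩
    let W2 : {S : Submodule ℂ H // finrank ℂ ↥S = k} := ⟨(X.1 ⊓ Y.1) ⊔ (ℂ ∙ w2), frW2⟩
    let W3 : {S : Submodule ℂ H // finrank ℂ ↥S = k} := ⟨(X.1 ⊓ Y.1) ⊔ (ℂ ∙ w3), frW3⟩
    obtain ⟨hA1, cA1⟩ := hoadj X W1 (by rw [pXW1.1]; exact hXY) pXW1.2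
    obtain ⟨hA2, cA2⟩ := hoadj X W2 (by rw [pXW2.1]; exact hXY) pXW2.2
    obtain ⟨hA3, cA3⟩ := hoadj X W3 (by rw [pXW3.1]; exact hXY) pXW3.2
    obtain ⟨hB1, cB1⟩ := hoadj Y W1 (by rw [pYW1.1]; exact hXY) pYW1.2
    obtain ⟨hB2, cB2⟩ := hoadj Y W2 (by rw [pYW2.1]; exact hXY) pYW2.2
    obtain ⟨hB3, cB3⟩ := hoadj Y W3 (by rw [pYW3.1]; exact hXY) pYW3.2
    obtain ⟨hC12, cC12⟩ := hoadj W1 W2 (by rw [pW12.1]; exact hXY) pW12.2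
    obtain ⟨hC13, cC13⟩ := hoadj W1 W3 (by rw [pW13.1]; exact hXY) pW13.2
    obtain ⟨hC23, cC23⟩ := hoadj W2 W3 (by rw [pW23.1]; exact hXY) pW23.2
    exact stmt16_endgame hk2 frA frB (f W1).2 (f W2).2 (f W3).2 hub
      hA1 cA1 hA2 cA2 hA3 hB1 cB1 hB2 cB2 hB3 hC12 cC12 hC13 cC13 hC23 cC23
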